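/- Let f satisfy hypothesis (H) and be of type C with switching point α and F(1) > 0, and let v_* ∈ (α, 1) be the unique point with F(v_*) = 0. For ε > 0 let v_ε be the critical front profile for parameters a = b = 1/ε normalized by v_ε(0) = α. Then, as ε → 0⁺, v_ε converges uniformly on the interval (−∞, v_* − α) to the piecewise linear function z ↦ min(max(z + α, 0), 1). -/

import Mathlib

open Real Set Filter Topology

/-- `Ffn f v = ∫₀^v f(s) ds`. -/
noncomputable def Ffn (f : ℝ → ℝ) (v : ℝ) : ℝ := ∫ s in (0:ℝ)..v, f s

/-- Hypothesis (H): `f` continuous on `[0,1]`, vanishing at the endpoints,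
with linear controls at `0` and `1`. -/
def HypH (f : ℝ → ℝ) : Prop :=
  ContinuousOn f (Set.Icc 0 1) ∧ f 0 = 0 ∧ f 1 = 0 ∧
    ∃ k > (0:ℝ), ∀ s ∈ Set.Icc (0:ℝ) 1, |f s| ≤ k * s ∧ |f s| ≤ k * (1 - s)

/-- Type A (monostable): `f > 0` on `(0,1)`. -/
def TypeA (f : ℝ → ℝ) : Prop := ∀ s ∈ Set.Ioo (0:ℝ) 1, 0 < f s

/-- Type B (combustion) with switching point `α`. -/
def TypeB (f : ℝ → ℝ) (α : ℝ) : Prop :=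
  α ∈ Set.Ioo (0:ℝ) 1 ∧ (∀ s ∈ Set.Icc (0:ℝ) α, f s = 0) ∧
    ∀ s ∈ Set.Ioo α 1, 0 < f s

/-- Type C (bistable) with switching point `α` and `∫₀¹ f ≥ 0`. -/
def TypeC (f : ℝ → ℝ) (α : ℝ) : Prop :=
  α ∈ Set.Ioo (0:ℝ) 1 ∧ (∀ s ∈ Set.Ioo (0:ℝ) α, f s < 0) ∧
    (∀ s ∈ Set.Ioo α 1, 0 < f s) ∧ 0 ≤ Ffn f 1

/-- `R_{a,b}(s) = √(s(2a + b²s))/(a + b²s)`. -/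
noncomputable def Rab (a b s : ℝ) : ℝ :=
  Real.sqrt (s * (2 * a + b ^ 2 * s)) / (a + b ^ 2 * s)

/-- `c` is an admissible speed for `(f, a, b)`: the first-order reduction
`y' = c·a·R_{a,b}(y) − f(v)` has a solution on `[0,1]` with `y(0) = y(1) = 0`
and `y > 0` on `(0,1)`. -/
def Admissible (f : ℝ → ℝ) (a b c : ℝ) : Prop :=
  ∃ y : ℝ → ℝ, y 0 = 0 ∧ y 1 = 0 ∧ (∀ v ∈ Set.Ioo (0:ℝ) 1, 0 < y v) ∧
    ∀ v ∈ Set.Icc (0:ℝ) 1,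
      HasDerivWithinAt y (c * a * Rab a b (y v) - f v) (Set.Icc 0 1) v

/-- A (monotone) front profile propagating with speed `c` for parameters `a, b`:
a strictly increasing `C²` solution of `(v'/√(a² − b²(v')²))' − c v' + f(v) = 0`
with `|v'| < a/b`, connecting `0` (at `−∞`) and `1` (at `+∞`). -/
def FrontProfile (f : ℝ → ℝ) (a b c : ℝ) (v : ℝ → ℝ) : Prop :=
  StrictMono v ∧ ContDiff ℝ 2 v ∧ (∀ z, |deriv v z| < a / b) ∧
    (∀ z, deriv (fun t => deriv v t / Real.sqrt (a ^ 2 - b ^ 2 * (deriv v t) ^ 2)) z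
        - c * deriv v z + f (v z) = 0) ∧
    Filter.Tendsto v Filter.atBot (nhds 0) ∧ Filter.Tendsto v Filter.atTop (nhds 1)

lemma aux_deriv_nonneg {v : ℝ → ℝ} (hm : Monotone v) (hd : Differentiable ℝ v) (z : ℝ) :
    0 ≤ deriv v z := by
  have h := (hd z).hasDerivAt
  have hs : Tendsto (slope v z) (𝓝[>] z) (𝓝 (deriv v z)) :=
    (hasDerivAt_iff_tendsto_slope.mp h).mono_left
      (nhdsWithin_mono _ (fun x hx => ne_of_gt hx))
  refine ge_of_tendsto hs ?_
  filter_upwards [self_mem_nhdsWithin] with x hx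
  have h1 : v z ≤ v x := hm (le_of_lt hx)
  have hxz : (0:ℝ) < x - z := sub_pos.mpr hx
  rw [slope_def_field]
  exact div_nonneg (sub_nonneg.mpr h1) hxz.le

lemma ffn_hasDerivAt {f : ℝ → ℝ} (hf : ContinuousOn f (Icc 0 1)) {x : ℝ}
    (hx : x ∈ Ioo (0:ℝ) 1) : HasDerivAt (Ffn f) (f x) x := by
  have hint : IntervalIntegrable f MeasureTheory.volume 0 x :=
    (hf.mono (by rw [uIcc_of_le hx.1.le]; exact Icc_subset_Icc le_rfl hx.2.le)).intervalIntegrable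
  have hmeas : StronglyMeasurableAtFilter f (𝓝 x) MeasureTheory.volume :=
    ContinuousOn.stronglyMeasurableAtFilter isOpen_Ioo (hf.mono Ioo_subset_Icc_self) x hx
  have hca : ContinuousAt f x := hf.continuousAt (Icc_mem_nhds hx.1 hx.2)
  exact intervalIntegral.integral_hasDerivAt_right hint hmeas hca

lemma ffn_continuousOn {f : ℝ → ℝ} (hf : ContinuousOn f (Icc 0 1)) :
    ContinuousOn (Ffn f) (Icc 0 1) := by
  have h := intervalIntegral.continuousOn_primitive_interval
    (a := (0:ℝ)) (b := 1) (μ := MeasureTheory.volume) (f := f) ?_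
  · rwa [uIcc_of_le zero_le_one] at h
  · rw [uIcc_of_le zero_le_one]
    exact hf.integrableOn_compact isCompact_Icc

lemma ffn_zero (f : ℝ → ℝ) : Ffn f 0 = 0 := intervalIntegral.integral_same

lemma ffn_neg {f : ℝ → ℝ} {α vstar : ℝ} (hf : ContinuousOn f (Icc 0 1))
    (hα : α ∈ Ioo (0:ℝ) 1) (hneg : ∀ s ∈ Ioo (0:ℝ) α, f s < 0)
    (hpos : ∀ s ∈ Ioo α 1, 0 < f s) (hvs : vstar ∈ Ioo α 1) (hFvs : Ffn f vstar = 0)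
    {w : ℝ} (hw : w ∈ Ioo (0:ℝ) vstar) : Ffn f w < 0 := by
  have hvs1 : vstar ≤ 1 := hvs.2.le
  have hints : ∀ s t : ℝ, 0 ≤ s → s ≤ t → t ≤ 1 → IntervalIntegrable f MeasureTheory.volume s t := by
    intro s t hs hst ht
    exact (hf.mono (by rw [uIcc_of_le hst]; exact Icc_subset_Icc hs ht)).intervalIntegrable
  rcases le_or_gt w α with hcase | hcase
  · -- w ≤ α : integral of negative function
    have h1 : 0 < ∫ x in (0:ℝ)..w, (-f) x := by
      apply intervalIntegral.intervalIntegral_pos_of_pos_on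
      · exact ((hints 0 w le_rfl hw.1.le (le_trans (le_trans hcase hα.2.le) le_rfl)).neg)
      · intro x hx
        have : f x < 0 := hneg x ⟨hx.1, lt_of_lt_of_le hx.2 hcase⟩
        simpa using this
      · exact hw.1
    have h2 : ∫ x in (0:ℝ)..w, (-f) x = - Ffn f w := by
      simp [Ffn, intervalIntegral.integral_neg]
    rw [h2] at h1; linarith
  · -- α < w : F w = F vstar − ∫_w^vstar f, and the latter is positive
    have hw1 : w ≤ 1 := le_trans hw.2.le hvs1
    have hadd : Ffn f w + ∫ x in w..vstar, f x = Ffn f vstar :=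
      intervalIntegral.integral_add_adjacent_intervals
        (hints 0 w le_rfl hw.1.le hw1) (hints w vstar (le_trans hα.1.le hcase.le) hw.2.le hvs1)
    have hpos2 : 0 < ∫ x in w..vstar, f x := by
      apply intervalIntegral.intervalIntegral_pos_of_pos_on
      · exact hints w vstar (le_trans hα.1.le hcase.le) hw.2.le hvs1
      · intro x hx
        exact hpos x ⟨lt_trans hcase hx.1, lt_of_lt_of_le hx.2 hvs1⟩
      · exact hw.2
    rw [hFvs] at hadd
    linarith

lemma speed_nonneg {f : ℝ → ℝ} (hf : ContinuousOn f (Icc 0 1)) (hF1 : 0 < Ffn f 1)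
    {a c : ℝ} (ha : 0 < a) (hadm : Admissible f a a c) : 0 ≤ c := by
  obtain ⟨y, hy0, hy1, hypos, hyd⟩ := hadm
  by_contra hneg
  push_neg at hneg
  have hycont : ContinuousOn y (Icc 0 1) := fun x hx => (hyd x hx).continuousWithinAt
  have hynn : ∀ x ∈ Icc (0:ℝ) 1, 0 ≤ y x := by
    intro x hx
    rcases eq_or_lt_of_le hx.1 with h | h
    · rw [← h, hy0]
    rcases eq_or_lt_of_le hx.2 with h' | h'
    · rw [h', hy1]
    · exact (hypos x ⟨h, h'⟩).le
  have hdenpos : ∀ x ∈ Icc (0:ℝ) 1, 0 < a + a ^ 2 * y x := by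
    intro x hx
    have := hynn x hx
    positivity
  have hGcont : ContinuousOn (fun w => c * a * Rab a a (y w) - f w) (Icc 0 1) := by
    apply ContinuousOn.sub _ hf
    apply ContinuousOn.mul continuousOn_const
    simp only [Rab]
    apply ContinuousOn.div
    · exact (hycont.mul (continuousOn_const.add (continuousOn_const.mul hycont))).sqrt
    · exact continuousOn_const.add (continuousOn_const.mul hycont)
    · intro x hx; exact ne_of_gt (hdenpos x hx)
  have huIcc : uIcc (0:ℝ) 1 = Icc 0 1 := uIcc_of_le zero_le_one
  have hint : IntervalIntegrable (fun w => c * a * Rab a a (y w) - f w) MeasureTheory.volume 0 1 :=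
    (hGcont.mono (by rw [huIcc])).intervalIntegrable
  have hint2 : IntervalIntegrable (fun w => (0:ℝ) - f w) MeasureTheory.volume 0 1 :=
    ((continuousOn_const.sub hf).mono (by rw [huIcc])).intervalIntegrable
  have hFTC : ∫ w in (0:ℝ)..1, (c * a * Rab a a (y w) - f w) = y 1 - y 0 := by
    apply intervalIntegral.integral_eq_sub_of_hasDeriv_right_of_le zero_le_one hycont _ hint
    intro x hx
    exact ((hyd x (Ioo_subset_Icc_self hx)).hasDerivAt
      (Icc_mem_nhds hx.1 hx.2)).hasDerivWithinAt
  have hmono' : ∫ w in (0:ℝ)..1, (c * a * Rab a a (y w) - f w)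
      ≤ ∫ w in (0:ℝ)..1, ((0:ℝ) - f w) := by
    apply intervalIntegral.integral_mono_on zero_le_one hint hint2
    intro x hx
    have hR : 0 ≤ Rab a a (y x) := by
      simp only [Rab]
      exact div_nonneg (Real.sqrt_nonneg _) (hdenpos x hx).le
    have : c * a * Rab a a (y x) ≤ 0 := by
      apply mul_nonpos_of_nonpos_of_nonneg _ hR
      exact mul_nonpos_of_nonpos_of_nonneg hneg.le ha.le
    linarith
  have heq : ∫ w in (0:ℝ)..1, ((0:ℝ) - f w) = - Ffn f 1 := by
    simp [Ffn, intervalIntegral.integral_neg]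
  rw [hFTC, hy0, hy1, heq] at hmono'
  simp at hmono'
  linarith

lemma profile_key {f : ℝ → ℝ} (hf : ContinuousOn f (Icc 0 1)) {ε c : ℝ} {v : ℝ → ℝ}
    (hε : 0 < ε) (hc : 0 ≤ c)
    (hmono : StrictMono v) (hC2 : ContDiff ℝ 2 v)
    (hslope : ∀ z, |deriv v z| < (1/ε) / (1/ε))
    (hode : ∀ z, deriv (fun t => deriv v t /
        Real.sqrt ((1/ε) ^ 2 - (1/ε) ^ 2 * (deriv v t) ^ 2)) z
        - c * deriv v z + f (v z) = 0)
    (hbot : Tendsto v atBot (𝓝 0)) (htop : Tendsto v atTop (𝓝 1)) :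
    (∀ z, v z ∈ Ioo (0:ℝ) 1) ∧ (∀ z, 0 ≤ deriv v z) ∧ (∀ z, deriv v z < 1) ∧
      (∀ z m, 0 < m → Ffn f (v z) ≤ -m → 1 - deriv v z ≤ ε ^ 2 / m ^ 2) := by
  have hεne : (1:ℝ)/ε ≠ 0 := by positivity
  have habs : ∀ z, |deriv v z| < 1 := by
    intro z; have := hslope z; rwa [div_self hεne] at this
  have hdv : Differentiable ℝ v := hC2.differentiable two_ne_zero
  have h2eq : (2 : WithTop ℕ∞) = 1 + 1 := by norm_num
  have hC1p : ContDiff ℝ 1 (deriv v) := (contDiff_succ_iff_deriv.mp (h2eq ▸ hC2)).2.2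
  have hdp : Differentiable ℝ (deriv v) := hC1p.differentiable one_ne_zero
  have hp0 : ∀ z, 0 ≤ deriv v z := aux_deriv_nonneg hmono.monotone hdv
  have hp1 : ∀ z, deriv v z < 1 := fun z => lt_of_le_of_lt (le_abs_self _) (habs z)
  have hv01 : ∀ z, v z ∈ Ioo (0:ℝ) 1 := by
    intro z
    constructor
    · have h1 : 0 ≤ v (z - 1) := by
        refine le_of_tendsto hbot ?_
        filter_upwards [eventually_le_atBot (z - 1)] with t ht
        exact hmono.monotone ht
      have : v (z - 1) < v z := hmono (by linarith)
      linarith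
    · have h1 : v (z + 1) ≤ 1 := by
        refine ge_of_tendsto htop ?_
        filter_upwards [eventually_ge_atTop (z + 1)] with t ht
        exact hmono.monotone ht
      have : v z < v (z + 1) := hmono (by linarith)
      linarith
  set G : ℝ → ℝ := fun t => deriv v t /
      Real.sqrt ((1/ε) ^ 2 - (1/ε) ^ 2 * (deriv v t) ^ 2) with hGdef
  have hode' : ∀ z, deriv G z = c * deriv v z - f (v z) := by
    intro z; have := hode z; linarith
  have h1mp : ∀ z, 0 < 1 - (deriv v z) ^ 2 := by
    intro z; nlinarith [hp0 z, hp1 z]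
  have hDpos : ∀ z, 0 < (1/ε) ^ 2 - (1/ε) ^ 2 * (deriv v z) ^ 2 := by
    intro z
    have h := h1mp z
    have he : (1/ε) ^ 2 - (1/ε) ^ 2 * (deriv v z) ^ 2 = (1/ε) ^ 2 * (1 - (deriv v z) ^ 2) := by
      ring
    rw [he]; positivity
  have hsqrtD : ∀ z, Real.sqrt ((1/ε) ^ 2 - (1/ε) ^ 2 * (deriv v z) ^ 2)
      = Real.sqrt (1 - (deriv v z) ^ 2) / ε := by
    intro z
    rw [show (1/ε) ^ 2 - (1/ε) ^ 2 * (deriv v z) ^ 2 = (1/ε) ^ 2 * (1 - (deriv v z) ^ 2) by ring,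
      Real.sqrt_mul (sq_nonneg _), Real.sqrt_sq (by positivity : (0:ℝ) ≤ 1/ε)]
    rw [one_div]
    ring
  have hsq1 : ∀ z, 0 < Real.sqrt (1 - (deriv v z) ^ 2) :=
    fun z => Real.sqrt_pos.mpr (h1mp z)
  have hG_eq : ∀ z, G z = ε * deriv v z / Real.sqrt (1 - (deriv v z) ^ 2) := by
    intro z
    have hz : G z = deriv v z / Real.sqrt ((1/ε) ^ 2 - (1/ε) ^ 2 * (deriv v z) ^ 2) := rfl
    rw [hz, hsqrtD z, div_div_eq_mul_div]
    ring
  have hGnn : ∀ z, 0 ≤ G z := by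
    intro z
    rw [hG_eq z]
    exact div_nonneg (mul_nonneg hε.le (hp0 z)) (hsq1 z).le
  set W : ℝ → ℝ := fun t => Real.sqrt (ε ^ 2 + G t ^ 2) with hWdef
  have hWz : ∀ z, W z = Real.sqrt (ε ^ 2 + G z ^ 2) := fun z => rfl
  have hWsq : ∀ z, ε ^ 2 + G z ^ 2 = ε ^ 2 / (1 - (deriv v z) ^ 2) := by
    intro z
    rw [hG_eq z, div_pow, Real.sq_sqrt (h1mp z).le]
    have hne : 1 - (deriv v z) ^ 2 ≠ 0 := (h1mp z).ne'
    field_simp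
    ring
  have hW_eq : ∀ z, W z = ε / Real.sqrt (1 - (deriv v z) ^ 2) := by
    intro z
    rw [hWz z, hWsq z, Real.sqrt_div (sq_nonneg ε), Real.sqrt_sq hε.le]
  have hWge : ∀ z, ε ≤ W z := by
    intro z
    rw [hWz z]
    calc ε = Real.sqrt (ε ^ 2) := (Real.sqrt_sq hε.le).symm
    _ ≤ Real.sqrt (ε ^ 2 + G z ^ 2) := Real.sqrt_le_sqrt (by nlinarith [sq_nonneg (G z)])
  have hWpos : ∀ z, 0 < W z := fun z => lt_of_lt_of_le hε (hWge z)
  have hGW : ∀ z, G z = deriv v z * W z := by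
    intro z
    rw [hG_eq z, hW_eq z]
    ring
  have hGdiff : ∀ z, DifferentiableAt ℝ G z := by
    intro z
    have hinner : DifferentiableAt ℝ
        (fun t => (1/ε) ^ 2 - (1/ε) ^ 2 * (deriv v t) ^ 2) z :=
      (differentiableAt_const _).sub ((differentiableAt_const _).mul ((hdp z).pow 2))
    have hsqrtdiff : DifferentiableAt ℝ
        (fun t => Real.sqrt ((1/ε) ^ 2 - (1/ε) ^ 2 * (deriv v t) ^ 2)) z :=
      hinner.sqrt (ne_of_gt (hDpos z))
    exact (hdp z).div hsqrtdiff (ne_of_gt (by rw [hsqrtD z]; exact div_pos (hsq1 z) hε))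
  have hGd : ∀ z, HasDerivAt G (c * deriv v z - f (v z)) z := by
    intro z
    have h := (hGdiff z).hasDerivAt
    rwa [hode' z] at h
  have hWd : ∀ z, HasDerivAt W (deriv v z * (c * deriv v z - f (v z))) z := by
    intro z
    have hu : HasDerivAt (fun t => ε ^ 2 + G t ^ 2)
        ((2:ℕ) * G z ^ 1 * (c * deriv v z - f (v z))) z := ((hGd z).pow 2).const_add (ε ^ 2)
    have hne : ε ^ 2 + G z ^ 2 ≠ 0 := by positivity
    have h := hu.sqrt hne
    convert h using 1
    rw [← hWz z, pow_one, hGW z]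
    have hWne : W z ≠ 0 := ne_of_gt (hWpos z)
    field_simp
    ring
  have hPhid : ∀ z, HasDerivAt (fun t => W t + Ffn f (v t)) (c * (deriv v z) ^ 2) z := by
    intro z
    have hF : HasDerivAt (fun t => Ffn f (v t)) (f (v z) * deriv v z) z :=
      (ffn_hasDerivAt hf (hv01 z)).comp z (hdv z).hasDerivAt
    have h := (hWd z).add hF
    exact h.congr_deriv (by ring)
  have hPhimono : Monotone (fun t => W t + Ffn f (v t)) :=
    monotone_of_deriv_nonneg (fun z => (hPhid z).differentiableAt)
      (fun z => by rw [(hPhid z).deriv]; positivity)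
  have hFlim : Tendsto (fun t => Ffn f (v t)) atBot (𝓝 0) := by
    have hvin : Tendsto v atBot (𝓝[Icc (0:ℝ) 1] 0) :=
      tendsto_nhdsWithin_iff.mpr ⟨hbot,
        Eventually.of_forall (fun z => Ioo_subset_Icc_self (hv01 z))⟩
    have hFc : ContinuousWithinAt (Ffn f) (Icc 0 1) 0 :=
      (ffn_continuousOn hf) 0 (left_mem_Icc.mpr zero_le_one)
    have h := hFc.tendsto.comp hvin
    simpa [ffn_zero, Function.comp_def] using h
  have hkey : ∀ z, ε ≤ W z + Ffn f (v z) := by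
    intro z
    have hlim : Tendsto (fun t => ε + Ffn f (v t)) atBot (𝓝 (ε + 0)) :=
      tendsto_const_nhds.add hFlim
    have h : ε + 0 ≤ W z + Ffn f (v z) := by
      refine le_of_tendsto hlim ?_
      filter_upwards [eventually_le_atBot z] with t ht
      have h1 : W t + Ffn f (v t) ≤ W z + Ffn f (v z) := hPhimono ht
      have h2 : ε ≤ W t := hWge t
      linarith
    linarith
  refine ⟨hv01, hp0, hp1, ?_⟩
  intro z m hm hFm
  have h1 : ε + m ≤ W z := by have := hkey z; linarith
  have hWm : m ≤ W z := by linarith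
  have hW0 : 0 < W z := lt_of_lt_of_le hm hWm
  have h2 : 1 - (deriv v z) ^ 2 = ε ^ 2 / W z ^ 2 := by
    rw [hW_eq z, div_pow, Real.sq_sqrt (h1mp z).le]
    rw [div_div_eq_mul_div, mul_comm, mul_div_assoc,
      div_self (by positivity : (ε:ℝ) ^ 2 ≠ 0), mul_one]
  have hle : 1 - deriv v z ≤ 1 - (deriv v z) ^ 2 := by nlinarith [hp0 z, hp1 z]
  have hm2 : m ^ 2 ≤ W z ^ 2 := by nlinarith
  have h3 : ε ^ 2 / W z ^ 2 ≤ ε ^ 2 / m ^ 2 := by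
    gcongr
  linarith [h2 ▸ hle]

/-- Proposition 4.9: type C reaction with `F(1) > 0`, `v_*` the unique
zero of `F` in `(α,1)`. For `a = b = 1/ε`, the critical profiles normalized by
`v_ε(0) = α` converge, uniformly on `(−∞, v_* − α)`, to the piecewise linear profile
`z ↦ min(max(z + α, 0), 1)`. -/
theorem statement19 (f : ℝ → ℝ) (α vstar : ℝ) (hH : HypH f) (hC : TypeC f α)
    (hF1 : 0 < Ffn f 1)
    (hvstar : vstar ∈ Set.Ioo α 1 ∧ Ffn f vstar = 0 ∧
      ∀ w ∈ Set.Ioo α 1, Ffn f w = 0 → w = vstar)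
    (cfun : ℝ → ℝ) (vfun : ℝ → ℝ → ℝ)
    (hcrit : ∀ ε : ℝ, 0 < ε → IsLeast {c | Admissible f (1/ε) (1/ε) c} (cfun ε))
    (hprof : ∀ ε : ℝ, 0 < ε →
      FrontProfile f (1/ε) (1/ε) (cfun ε) (vfun ε) ∧ vfun ε 0 = α) :
    TendstoUniformlyOn vfun (fun z => min (max (z + α) 0) 1)
      (nhdsWithin 0 (Set.Ioi 0)) (Set.Iio (vstar - α)) := by
  obtain ⟨hfc, hf0, hf1, -⟩ := hH
  obtain ⟨hα, hfneg, hfpos, -⟩ := hC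
  obtain ⟨hvsIoo, hFvs, -⟩ := hvstar
  have hα0 : 0 < α := hα.1
  have hα1 : α < 1 := hα.2
  have hvsα : α < vstar := hvsIoo.1
  have hvs1 : vstar < 1 := hvsIoo.2
  have hvs0 : 0 < vstar := lt_trans hα0 hvsα
  rw [Metric.tendstoUniformlyOn_iff]
  intro δ hδ
  -- the small parameter δ₀
  set δ₀ : ℝ := min (min (δ/4) (α/2)) ((vstar - α)/2) with hδ₀def
  have hδ₀pos : 0 < δ₀ := lt_min (lt_min (by linarith) (by linarith)) (by linarith)
  have hδ₀δ : δ₀ ≤ δ/4 := le_trans (min_le_left _ _) (min_le_left _ _)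
  have hδ₀α : δ₀ < α :=
    lt_of_le_of_lt (le_trans (min_le_left _ _) (min_le_right _ _)) (by linarith)
  have hδ₀vsα : δ₀ < vstar - α := lt_of_le_of_lt (min_le_right _ _) (by linarith)
  have hδ₀le : δ₀ ≤ vstar - δ₀ := by linarith
  -- the max of Ffn f on [δ₀, vstar - δ₀] is -m < 0
  have hsubset : Icc δ₀ (vstar - δ₀) ⊆ Ioo 0 vstar := fun x hx =>
    ⟨lt_of_lt_of_le hδ₀pos hx.1, lt_of_le_of_lt hx.2 (by linarith)⟩
  have hsubset2 : Icc δ₀ (vstar - δ₀) ⊆ Icc 0 1 := fun x hx =>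
    ⟨by linarith [hx.1], by linarith [hx.2]⟩
  have hFfc : ContinuousOn (Ffn f) (Icc δ₀ (vstar - δ₀)) :=
    (ffn_continuousOn hfc).mono hsubset2
  obtain ⟨w₀, hw₀mem, hw₀max⟩ :=
    isCompact_Icc.exists_isMaxOn (nonempty_Icc.mpr hδ₀le) hFfc
  set m : ℝ := -(Ffn f w₀) with hmdef
  have hm : 0 < m := by
    have := ffn_neg hfc hα hfneg hfpos hvsIoo hFvs (hsubset hw₀mem)
    rw [hmdef]; linarith
  have hFle : ∀ x ∈ Icc δ₀ (vstar - δ₀), Ffn f x ≤ -m := by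
    intro x hx
    have := hw₀max hx
    rw [hmdef]; simpa using this
  -- target slope defect η
  set η : ℝ := min (δ/8) (1/2) with hηdef
  have hηpos : 0 < η := lt_min (by linarith) (by norm_num)
  have hη2 : η ≤ 1/2 := min_le_right _ _
  have hηδ : η ≤ δ/8 := min_le_left _ _
  set ε₁ : ℝ := m * min η 1 with hε₁def
  have hminpos : 0 < min η 1 := lt_min hηpos one_pos
  have hε₁pos : 0 < ε₁ := mul_pos hm hminpos
  filter_upwards [Ioo_mem_nhdsGT_of_mem (left_mem_Ico.mpr hε₁pos)] with ε hεI
  have hεpos : 0 < ε := hεI.1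
  have hεlt : ε < ε₁ := hεI.2
  obtain ⟨⟨hmono, hC2, hslope, hode, hbot, htop⟩, h0⟩ := hprof ε hεpos
  have hc : 0 ≤ cfun ε := speed_nonneg hfc hF1 (by positivity) (hcrit ε hεpos).1
  obtain ⟨hv01, hp0, hp1, hkey⟩ :=
    profile_key hfc hεpos hc hmono hC2 hslope hode hbot htop
  -- the slope defect is at most η on the good region
  have hεm : ε ^ 2 / m ^ 2 ≤ η := by
    have hmin1 : min η 1 ≤ 1 := min_le_right _ _
    have hminη : min η 1 ≤ η := min_le_left _ _
    have hq : (min η 1) ^ 2 ≤ η := by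
      have h := mul_le_mul hminη hmin1 hminpos.le hηpos.le
      rw [sq]
      linarith
    have h1 : ε ^ 2 ≤ ε₁ ^ 2 := pow_le_pow_left₀ hεpos.le hεlt.le 2
    have h1' : ε₁ ^ 2 = m ^ 2 * (min η 1) ^ 2 := by rw [hε₁def]; ring
    have h2 : m ^ 2 * (min η 1) ^ 2 ≤ m ^ 2 * η :=
      mul_le_mul_of_nonneg_left hq (sq_nonneg m)
    rw [div_le_iff₀ (by positivity)]
    linarith
  have hplow : ∀ z, vfun ε z ∈ Icc δ₀ (vstar - δ₀) → 1 - η ≤ deriv (vfun ε) z := by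
    intro z hz
    have := hkey z m hm (hFle _ hz)
    linarith [hεm]
  -- IVT points z₁ and z₂
  have hcontv : Continuous (vfun ε) := hC2.continuous
  obtain ⟨t₁, ht₁⟩ := (hbot.eventually_lt_const hδ₀pos).exists
  obtain ⟨t₂, ht₂⟩ := (htop.eventually_const_lt (show vstar - δ₀ < 1 by linarith)).exists
  have ht₁₂ : t₁ ≤ t₂ := by
    by_contra h
    push_neg at h
    have := hmono h
    linarith
  obtain ⟨z₁, hz₁mem, hz₁⟩ :=
    intermediate_value_Icc ht₁₂ hcontv.continuousOn ⟨ht₁.le, by linarith⟩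
  obtain ⟨z₂, hz₂mem, hz₂⟩ :=
    intermediate_value_Icc ht₁₂ hcontv.continuousOn ⟨by linarith, ht₂.le⟩
  have hz₁0 : z₁ < 0 := by
    have h : vfun ε z₁ < vfun ε 0 := by rw [hz₁, h0]; exact hδ₀α
    exact hmono.lt_iff_lt.mp h
  have hz₂0 : 0 < z₂ := by
    have h : vfun ε 0 < vfun ε z₂ := by rw [hz₂, h0]; linarith
    exact hmono.lt_iff_lt.mp h
  have hz₁₂ : z₁ < z₂ := lt_trans hz₁0 hz₂0
  -- global upper/lower linear bounds from v' < 1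
  have hdv : Differentiable ℝ (vfun ε) := hC2.differentiable two_ne_zero
  have hwd : ∀ z, HasDerivAt (fun t => t - vfun ε t) (1 - deriv (vfun ε) z) z :=
    fun z => (hasDerivAt_id z).sub (hdv z).hasDerivAt
  have hwmono : Monotone (fun t => t - vfun ε t) :=
    monotone_of_deriv_nonneg (fun z => (hwd z).differentiableAt)
      (fun z => by rw [(hwd z).deriv]; linarith [hp1 z])
  have hub : ∀ z, 0 ≤ z → vfun ε z ≤ z + α := by
    intro z hz
    have h := hwmono hz
    simp only at h
    rw [h0] at h
    linarith
  have hlb : ∀ z, z ≤ 0 → z + α ≤ vfun ε z := by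
    intro z hz
    have h := hwmono hz
    simp only at h
    rw [h0] at h
    linarith
  -- the almost-linear bound on [z₁، z₂]
  have hud : ∀ z, HasDerivAt (fun t => vfun ε t - (1 - η) * t)
      (deriv (vfun ε) z - (1 - η)) z := by
    intro z
    have h1 := (hasDerivAt_id z).const_mul (1 - η)
    have h2 := (hdv z).hasDerivAt.sub h1
    exact h2.congr_deriv (by ring)
  have humono : MonotoneOn (fun t => vfun ε t - (1 - η) * t) (Icc z₁ z₂) := by
    apply monotoneOn_of_deriv_nonneg (convex_Icc _ _)
    · exact (hcontv.sub (continuous_const.mul continuous_id)).continuousOn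
    · intro x _
      exact (hud x).differentiableAt.differentiableWithinAt
    · intro x hx
      rw [interior_Icc] at hx
      rw [(hud x).deriv]
      have hvx : vfun ε x ∈ Icc δ₀ (vstar - δ₀) :=
        ⟨by rw [← hz₁]; exact hmono.monotone hx.1.le,
         by rw [← hz₂]; exact hmono.monotone hx.2.le⟩
      have := hplow x hvx
      linarith
  have h0mem : (0:ℝ) ∈ Icc z₁ z₂ := ⟨hz₁0.le, hz₂0.le⟩
  have hz₂2 : z₂ ≤ 2 := by
    have h := humono h0mem (right_mem_Icc.mpr hz₁₂.le) hz₂0.le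
    simp only at h
    rw [h0, hz₂] at h
    simp only [mul_zero] at h
    have hh : (1/2) * z₂ ≤ (1 - η) * z₂ :=
      mul_le_mul_of_nonneg_right (by linarith) hz₂0.le
    linarith
  have hz₁2 : -2 ≤ z₁ := by
    have h := humono (left_mem_Icc.mpr hz₁₂.le) h0mem hz₁0.le
    simp only at h
    rw [h0, hz₁] at h
    simp only [mul_zero] at h
    have hh : (1/2) * (-z₁) ≤ (1 - η) * (-z₁) :=
      mul_le_mul_of_nonneg_right (by linarith) (by linarith)
    have hh2 : (1 - η) * (-z₁) = -((1 - η) * z₁) := by ring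
    linarith
  -- final pointwise estimate
  intro z hz
  rw [Real.dist_eq]
  have hzvs : z + α < vstar := by
    have : z < vstar - α := hz
    linarith
  have hmin : min (max (z + α) 0) 1 = max (z + α) 0 :=
    min_eq_left (max_le (by linarith) zero_le_one)
  rw [hmin]
  have hvpos := (hv01 z).1
  have hvlt1 := (hv01 z).2
  rcases lt_or_ge z z₁ with hcase | hcase
  · -- left tail
    have hv_le : vfun ε z ≤ δ₀ := by rw [← hz₁]; exact (hmono hcase).le
    have hza : z + α ≤ δ₀ := by
      have h1 : z₁ + α ≤ vfun ε z₁ := hlb z₁ hz₁0.le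
      rw [hz₁] at h1
      linarith
    have hmaxle : max (z + α) 0 ≤ δ₀ := max_le hza hδ₀pos.le
    have hmaxge : (0:ℝ) ≤ max (z + α) 0 := le_max_right _ _
    rw [abs_sub_lt_iff]
    constructor <;> linarith
  · rcases le_or_gt z z₂ with hcase2 | hcase2
    · -- middle region
      have hzmem : z ∈ Icc z₁ z₂ := ⟨hcase, hcase2⟩
      rcases le_or_gt z 0 with hz0 | hz0
      · have hvlb : z + α ≤ vfun ε z := hlb z hz0
        have hvub : vfun ε z ≤ z + α + η * 2 := by
          have h := humono hzmem h0mem hz0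
          simp only at h
          rw [h0] at h
          simp only [mul_zero] at h
          have hh : η * (-z) ≤ η * 2 :=
            mul_le_mul_of_nonneg_left (by linarith) hηpos.le
          have hh3 : (1 - η) * z = z - η * z := by ring
          have hh4 : η * (-z) = -(η * z) := by ring
          linarith
        rcases le_or_gt 0 (z + α) with hza | hza
        · rw [max_eq_left hza, abs_sub_lt_iff]
          constructor <;> linarith
        · rw [max_eq_right hza.le, abs_sub_lt_iff]
          constructor <;> linarith
      · have hvub : vfun ε z ≤ z + α := hub z hz0.le
        have hvlb : z + α - η * 2 ≤ vfun ε z := by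
          have h := humono h0mem hzmem hz0.le
          simp only at h
          rw [h0] at h
          simp only [mul_zero] at h
          have hh : η * z ≤ η * 2 :=
            mul_le_mul_of_nonneg_left (by linarith) hηpos.le
          have hh3 : (1 - η) * z = z - η * z := by ring
          linarith
        have hza : (0:ℝ) ≤ z + α := by linarith
        rw [max_eq_left hza, abs_sub_lt_iff]
        constructor <;> linarith
    · -- right region
      have hv_ge : vstar - δ₀ ≤ vfun ε z := by rw [← hz₂]; exact (hmono hcase2).le
      have hv_ub : vfun ε z ≤ z + α := hub z (by linarith)
      have hza : (0:ℝ) ≤ z + α := by linarith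
      rw [max_eq_left hza, abs_sub_lt_iff]
      constructor <;> linarith
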